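/- KAK equivalences of two-qubit Pauli rotations: for all real k_x, k_y, k_z, writing E(k_x,k_y,k_z) = exp( i·(k_x·(X⊗X) + k_y·(Y⊗Y) + k_z·(Z⊗Z)) ), the following three identities hold: (i) E(k_x + π/2, k_y, k_z) = ((i·X) ⊗ X) · E(k_x,k_y,k_z); (ii) E(−k_x, −k_y, k_z) = (Z ⊗ 1) · E(k_x,k_y,k_z) · (Z ⊗ 1); (iii) E(k_z, k_y, k_x) = (H ⊗ H) · E(k_x,k_y,k_z) · (H ⊗ H), where H = (1/√2)·!![1,1;1,−1]. In particular, shifting one KAK coefficient by π/2, reversing the signs of a pair of coefficients, or swapping a pair of coefficients yields a unitary that differs from the original only by left and right multiplication by tensor products of single-qubit unitaries (KAK equivalence). -/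

import Mathlib

open Matrix Kronecker

/-- The Pauli `X` matrix. -/
noncomputable def PauliX : Matrix (Fin 2) (Fin 2) ℂ := !![0, 1; 1, 0]

/-- The Pauli `Y` matrix. -/
noncomputable def PauliY : Matrix (Fin 2) (Fin 2) ℂ := !![0, -Complex.I; Complex.I, 0]

/-- The Pauli `Z` matrix. -/
noncomputable def PauliZ : Matrix (Fin 2) (Fin 2) ℂ := !![1, 0; 0, -1]

/-- The Hadamard matrix `H = (1/√2)·!![1,1;1,−1]`. -/
noncomputable def Hadamard : Matrix (Fin 2) (Fin 2) ℂ :=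
  (1 / (Real.sqrt 2 : ℂ)) • !![1, 1; 1, -1]

/-- `E(kx,ky,kz) = exp(i(kx X⊗X + ky Y⊗Y + kz Z⊗Z))`, the two-qubit Pauli rotation
with KAK coefficients `kx, ky, kz`. -/
noncomputable def Egate (kx ky kz : ℝ) : Matrix (Fin 2 × Fin 2) (Fin 2 × Fin 2) ℂ :=
  NormedSpace.exp (Complex.I •
    ((kx : ℂ) • (PauliX ⊗ₖ PauliX) + (ky : ℂ) • (PauliY ⊗ₖ PauliY) +
      (kz : ℂ) • (PauliZ ⊗ₖ PauliZ)))

section KAKhelpers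

-- 2x2 facts
lemma hXY : PauliX * PauliY = -(PauliY * PauliX) := by
  ext i j; fin_cases i <;> fin_cases j <;>
    simp [PauliX, PauliY, Matrix.mul_apply, Fin.sum_univ_two]
lemma hXZ : PauliX * PauliZ = -(PauliZ * PauliX) := by
  ext i j; fin_cases i <;> fin_cases j <;>
    simp [PauliX, PauliZ, Matrix.mul_apply, Fin.sum_univ_two]
lemma hYZ : PauliY * PauliZ = -(PauliZ * PauliY) := by
  ext i j; fin_cases i <;> fin_cases j <;>
    simp [PauliY, PauliZ, Matrix.mul_apply, Fin.sum_univ_two]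
lemma hZXZ : PauliZ * PauliX * PauliZ = -PauliX := by
  ext i j; fin_cases i <;> fin_cases j <;>
    simp [PauliX, PauliZ, Matrix.mul_apply, Fin.sum_univ_two]
lemma hZYZ : PauliZ * PauliY * PauliZ = -PauliY := by
  ext i j; fin_cases i <;> fin_cases j <;>
    simp [PauliY, PauliZ, Matrix.mul_apply, Fin.sum_univ_two]
lemma hZZ : PauliZ * PauliZ = 1 := by
  ext i j; fin_cases i <;> fin_cases j <;>
    simp [PauliZ, Matrix.mul_apply, Fin.sum_univ_two, Matrix.one_apply]
lemma hc2 : (1 / (Real.sqrt 2 : ℂ)) * (1 / (Real.sqrt 2 : ℂ)) = 1/2 := by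
  rw [div_mul_div_comm, one_mul, ← Complex.ofReal_mul, Real.mul_self_sqrt (by norm_num)]
  norm_num
lemma hHXH : Hadamard * PauliX * Hadamard = PauliZ := by
  rw [Hadamard, Matrix.smul_mul, Matrix.smul_mul, Matrix.mul_smul, smul_smul, hc2]
  ext i j; fin_cases i <;> fin_cases j <;>
    simp [PauliX, PauliZ, Matrix.mul_apply, Fin.sum_univ_two] <;> ring
lemma hHZH : Hadamard * PauliZ * Hadamard = PauliX := by
  rw [Hadamard, Matrix.smul_mul, Matrix.smul_mul, Matrix.mul_smul, smul_smul, hc2]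
  ext i j; fin_cases i <;> fin_cases j <;>
    simp [PauliX, PauliZ, Matrix.mul_apply, Fin.sum_univ_two] <;> ring
lemma hHYH : Hadamard * PauliY * Hadamard = -PauliY := by
  rw [Hadamard, Matrix.smul_mul, Matrix.smul_mul, Matrix.mul_smul, smul_smul, hc2]
  ext i j; fin_cases i <;> fin_cases j <;>
    simp [PauliY, Matrix.mul_apply, Fin.sum_univ_two] <;> ring
lemma hHH : Hadamard * Hadamard = 1 := by
  rw [Hadamard, Matrix.smul_mul, Matrix.mul_smul, smul_smul, hc2]
  ext i j; fin_cases i <;> fin_cases j <;>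
    simp [Matrix.mul_apply, Fin.sum_univ_two, Matrix.one_apply] <;> ring

-- 4x4 abbreviations
local notation "XX" => PauliX ⊗ₖ PauliX
local notation "YY" => PauliY ⊗ₖ PauliY
local notation "ZZ" => PauliZ ⊗ₖ PauliZ
local notation "U'" => PauliZ ⊗ₖ (1 : Matrix (Fin 2) (Fin 2) ℂ)
local notation "W'" => Hadamard ⊗ₖ Hadamard

lemma neg_kron (A B : Matrix (Fin 2) (Fin 2) ℂ) : (-A) ⊗ₖ B = -(A ⊗ₖ B) := by
  ext ⟨i,j⟩ ⟨k,l⟩; simp [Matrix.kroneckerMap_apply]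
lemma kron_neg (A B : Matrix (Fin 2) (Fin 2) ℂ) : A ⊗ₖ (-B) = -(A ⊗ₖ B) := by
  ext ⟨i,j⟩ ⟨k,l⟩; simp [Matrix.kroneckerMap_apply]

lemma hUU : U' * U' = 1 := by
  rw [← Matrix.mul_kronecker_mul, hZZ, Matrix.one_mul, Matrix.one_kronecker_one]
lemma hWW : W' * W' = 1 := by
  rw [← Matrix.mul_kronecker_mul, hHH, Matrix.one_kronecker_one]

lemma anticomm_comm {A B : Matrix (Fin 2) (Fin 2) ℂ} (h : A * B = -(B * A)) :
    Commute (A ⊗ₖ A) (B ⊗ₖ B) := by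
  unfold Commute SemiconjBy
  rw [← Matrix.mul_kronecker_mul, ← Matrix.mul_kronecker_mul, h,
    neg_kron, kron_neg, neg_neg]

lemma hUXXU : U' * (XX) * U' = -(XX) := by
  rw [← Matrix.mul_kronecker_mul, ← Matrix.mul_kronecker_mul, hZXZ, Matrix.one_mul,
    Matrix.mul_one, neg_kron]
lemma hUYYU : U' * (YY) * U' = -(YY) := by
  rw [← Matrix.mul_kronecker_mul, ← Matrix.mul_kronecker_mul, hZYZ, Matrix.one_mul,
    Matrix.mul_one, neg_kron]
lemma hUZZU : U' * (ZZ) * U' = ZZ := by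
  rw [← Matrix.mul_kronecker_mul, ← Matrix.mul_kronecker_mul, hZZ,
    Matrix.one_mul, Matrix.mul_one]
lemma hWXXW : W' * (XX) * W' = ZZ := by
  rw [← Matrix.mul_kronecker_mul, ← Matrix.mul_kronecker_mul, hHXH]
lemma hWYYW : W' * (YY) * W' = YY := by
  rw [← Matrix.mul_kronecker_mul, ← Matrix.mul_kronecker_mul, hHYH,
    neg_kron, kron_neg, neg_neg]
lemma hWZZW : W' * (ZZ) * W' = XX := by
  rw [← Matrix.mul_kronecker_mul, ← Matrix.mul_kronecker_mul, hHZH]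

lemma conj_expand (V A B C A' B' C' : Matrix (Fin 2 × Fin 2) (Fin 2 × Fin 2) ℂ)
    (hA : V * A * V = A') (hB : V * B * V = B') (hC : V * C * V = C') (a b c : ℂ) :
    V * (Complex.I • (a • A + b • B + c • C)) * V =
      Complex.I • (a • A' + b • B' + c • C') := by
  subst hA hB hC
  simp only [Matrix.mul_smul, Matrix.smul_mul, mul_add, add_mul, smul_add, Matrix.mul_assoc]


lemma part2 (kx ky kz : ℝ) :
    Egate (-kx) (-ky) kz = U' * Egate kx ky kz * U' := by
  have hUinv : (U')⁻¹ = (U') := Matrix.inv_eq_right_inv hUU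
  have h := Matrix.exp_conj (U')
    (Complex.I • ((kx:ℂ) • XX + (ky:ℂ) • YY + (kz:ℂ) • ZZ))
    (⟨⟨_, _, hUU, hUU⟩, rfl⟩)
  rw [hUinv] at h
  unfold Egate
  rw [← h, conj_expand _ _ _ _ _ _ _ hUXXU hUYYU hUZZU]
  congr 1
  push_cast
  module

lemma part3 (kx ky kz : ℝ) :
    Egate kz ky kx = W' * Egate kx ky kz * W' := by
  have hWinv : (W')⁻¹ = (W') := Matrix.inv_eq_right_inv hWW
  have h := Matrix.exp_conj (W')
    (Complex.I • ((kx:ℂ) • XX + (ky:ℂ) • YY + (kz:ℂ) • ZZ))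
    (⟨⟨_, _, hWW, hWW⟩, rfl⟩)
  rw [hWinv] at h
  unfold Egate
  rw [← h, conj_expand _ _ _ _ _ _ _ hWXXW hWYYW hWZZW]
  congr 1
  module

noncomputable def dvec : Fin 2 × Fin 2 → ℂ := fun p =>
  if p.1 = p.2 then Complex.I * ((Real.pi / 2 : ℝ) : ℂ) else -(Complex.I * ((Real.pi / 2 : ℝ) : ℂ))

lemma hZZdiag : (Complex.I * ((Real.pi / 2 : ℝ) : ℂ)) • (ZZ) = Matrix.diagonal dvec := by
  ext ⟨i, j⟩ ⟨k, l⟩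
  fin_cases i <;> fin_cases j <;> fin_cases k <;> fin_cases l <;>
    simp [dvec, PauliZ, Matrix.diagonal, Matrix.kroneckerMap_apply, Prod.ext_iff]

lemma e1 : Complex.exp (Complex.I * ((Real.pi : ℂ) / 2)) = Complex.I := by
  rw [show ((Real.pi : ℂ)/2) = ((Real.pi/2 : ℝ) : ℂ) by push_cast; ring, mul_comm, Complex.exp_mul_I, ← Complex.ofReal_cos, ← Complex.ofReal_sin,
    Real.cos_pi_div_two, Real.sin_pi_div_two]
  simp

lemma e2 : Complex.exp (-(Complex.I * ((Real.pi : ℂ) / 2))) = -Complex.I := by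
  rw [show -(Complex.I * ((Real.pi : ℂ) / 2)) = ((-(Real.pi / 2) : ℝ) : ℂ) * Complex.I by
    push_cast; ring, Complex.exp_mul_I, ← Complex.ofReal_cos, ← Complex.ofReal_sin,
    Real.cos_neg, Real.sin_neg, Real.cos_pi_div_two, Real.sin_pi_div_two]
  simp

lemma hexpdvec : Matrix.diagonal (NormedSpace.exp dvec) = Complex.I • (ZZ) := by
  have h1 : NormedSpace.exp dvec = fun p => Complex.exp (dvec p) := by
    funext p; rw [Pi.coe_exp, ← Complex.exp_eq_exp_ℂ]
  rw [h1]
  ext ⟨i, j⟩ ⟨k, l⟩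
  fin_cases i <;> fin_cases j <;> fin_cases k <;> fin_cases l <;>
    simp [dvec, PauliZ, Matrix.diagonal, Matrix.kroneckerMap_apply, Prod.ext_iff, e1, e2]

lemma hexpB : NormedSpace.exp ((Complex.I * ((Real.pi / 2 : ℝ) : ℂ)) • XX)
    = Complex.I • (XX) := by
  have hWinv : (W')⁻¹ = (W') := Matrix.inv_eq_right_inv hWW
  have hx : (Complex.I * ((Real.pi / 2 : ℝ) : ℂ)) • (XX) = W' * Matrix.diagonal dvec * (W')⁻¹ := by
    rw [hWinv, ← hZZdiag, Matrix.mul_smul, Matrix.smul_mul, hWZZW]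
  rw [hx, Matrix.exp_conj _ _ (⟨⟨_, _, hWW, hWW⟩, rfl⟩), Matrix.exp_diagonal,
    hexpdvec, hWinv, Matrix.mul_smul, Matrix.smul_mul, hWZZW]

lemma part1 (kx ky kz : ℝ) :
    Egate (kx + Real.pi / 2) ky kz = ((Complex.I • PauliX) ⊗ₖ PauliX) * Egate kx ky kz := by
  have hsplit : Complex.I • (((kx + Real.pi / 2 : ℝ) : ℂ) • (XX) + (ky:ℂ) • YY + (kz:ℂ) • ZZ)
      = (Complex.I * ((Real.pi / 2 : ℝ) : ℂ)) • (XX)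
        + Complex.I • ((kx:ℂ) • XX + (ky:ℂ) • YY + (kz:ℂ) • ZZ) := by
    push_cast; module
  have cXY : Commute (XX) (YY) := anticomm_comm hXY
  have cXZ : Commute (XX) (ZZ) := anticomm_comm hXZ
  have hcomm : Commute ((Complex.I * ((Real.pi / 2 : ℝ) : ℂ)) • XX)
      (Complex.I • ((kx:ℂ) • XX + (ky:ℂ) • YY + (kz:ℂ) • ZZ)) := by
    refine Commute.smul_left ?_ _
    refine Commute.smul_right ?_ _
    exact (((Commute.refl (XX)).smul_right _).add_right (cXY.smul_right _)).add_right
      (cXZ.smul_right _)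
  unfold Egate
  rw [hsplit, Matrix.exp_add_of_commute _ _ hcomm, hexpB, Matrix.smul_kronecker]

end KAKhelpers

/-- **KAK equivalences of two-qubit Pauli rotations**:
(i) shifting `kx` by `π/2` multiplies `E` on the left by `(i·X) ⊗ X`;
(ii) reversing the signs of `kx, ky` conjugates `E` by `Z ⊗ 1`;
(iii) swapping `kx` and `kz` conjugates `E` by `H ⊗ H`.
Hence these operations yield KAK-equivalent unitaries. -/
theorem KAK_equivalences (kx ky kz : ℝ) :
    Egate (kx + Real.pi / 2) ky kz = ((Complex.I • PauliX) ⊗ₖ PauliX) * Egate kx ky kz ∧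
    Egate (-kx) (-ky) kz =
      (PauliZ ⊗ₖ (1 : Matrix (Fin 2) (Fin 2) ℂ)) * Egate kx ky kz *
        (PauliZ ⊗ₖ (1 : Matrix (Fin 2) (Fin 2) ℂ)) ∧
    Egate kz ky kx = (Hadamard ⊗ₖ Hadamard) * Egate kx ky kz * (Hadamard ⊗ₖ Hadamard) := by
  exact ⟨part1 kx ky kz, part2 kx ky kz, part3 kx ky kz⟩
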